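/- Let M ≥ 1, n ≥ 1, and work in ℂ[x_0, …, x_{2M}]. Set g_A = x_0 x_1 ⋯ x_{M−1} · [x_0 … x_{M−1}] · [x_M … x_{2M}], and for j = 0, …, M set h_{A_j} = x_1 ⋯ x_{M−1} x_{M+j} · [x_1 … x_{M−1} x_{M+j}] · [x_M … x̂_{M+j} … x_{2M}]. Then g_A = ∑_{j=0}^{M} (−1)^{j+M−1} · x_0 · x_{M+j}^{n−1} · [x_0 x_1] ⋯ [x_0 x_{M−1}] · h_{A_j}. -/

import Mathlib

open MvPolynomial Finset

/-- The Fermat bracket `[S] = ∏_{p < q, p,q ∈ S} (x_p^n - x_q^n)` of a subset `S`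
of the variable indices (for an increasing tuple of indices this agrees with the
bracket of the tuple). -/
noncomputable def brS (n : ℕ) {m : ℕ} (S : Finset (Fin m)) : MvPolynomial (Fin m) ℂ :=
  ∏ p ∈ S, ∏ q ∈ S, if p < q then X p ^ n - X q ^ n else 1

namespace GADecomp

variable {R : Type*} [CommRing R]

def Dprod {k : ℕ} (w : Fin k → R) : R :=
  ∏ p : Fin k, ∏ q : Fin k, if p < q then w q - w p else 1

def Vprod {k : ℕ} (w : Fin k → R) : R :=
  ∏ p : Fin k, ∏ q : Fin k, if p < q then w p - w q else 1

lemma det_vand (k : ℕ) (w : Fin k → R) :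
    (Matrix.of fun i j : Fin k => w j ^ (i : ℕ)).det = Dprod w := by
  have h : (Matrix.of fun i j : Fin k => w j ^ (i : ℕ))
      = Matrix.transpose (Matrix.vandermonde w) := by
    ext i j; simp [Matrix.vandermonde, Matrix.transpose_apply]
  rw [h, Matrix.det_transpose, Matrix.det_vandermonde, Dprod]
  refine Finset.prod_congr rfl fun p _ => ?_
  rw [← prod_filter]
  congr 1
  ext q; simp

lemma keyD (m : ℕ) (v : Fin (m + 1) → R) (c : ℕ → R) :
    ∑ j : Fin (m + 1), (-1 : R) ^ (m + (j : ℕ)) *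
        (∑ k ∈ Finset.range (m + 1), c k * v j ^ k) * Dprod (v ∘ j.succAbove)
      = c m * Dprod v := by
  set W : Matrix (Fin (m + 1)) (Fin (m + 1)) R := Matrix.of fun i j => v j ^ (i : ℕ) with hW
  set f : Fin (m + 1) → R := fun j => ∑ k ∈ Finset.range (m + 1), c k * v j ^ k with hf
  have hrow : f = ∑ k : Fin (m + 1), (fun k : Fin (m + 1) => c (k : ℕ)) k • W k := by
    funext j
    rw [Finset.sum_apply]
    show ∑ k ∈ Finset.range (m + 1), c k * v j ^ k = _
    rw [← Fin.sum_univ_eq_sum_range (fun k => c k * v j ^ k)]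
    refine Finset.sum_congr rfl fun k _ => ?_
    simp [hW]
  have h1 : (W.updateRow (Fin.last m) f).det = c m * W.det := by
    rw [hrow, Matrix.det_updateRow_sum]
    simp
  have h2 : (W.updateRow (Fin.last m) f).det
      = ∑ j : Fin (m + 1), (-1 : R) ^ (m + (j : ℕ)) * f j * Dprod (v ∘ j.succAbove) := by
    rw [Matrix.det_succ_row _ (Fin.last m)]
    refine Finset.sum_congr rfl fun j _ => ?_
    rw [Fin.val_last, Matrix.updateRow_self]
    congr 1
    rw [← det_vand]
    congr 1
    ext i k
    simp only [Matrix.submatrix_apply, Fin.succAbove_last]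
    rw [Matrix.updateRow_ne (by exact (Fin.castSucc_lt_last i).ne)]
    simp [hW]
  rw [← h2, h1, det_vand]

lemma Dprod_rev {k : ℕ} (w : Fin k → R) : Dprod (w ∘ Fin.rev) = Vprod w := by
  rw [Dprod, Vprod]
  have h1 : ∀ p : Fin k, (∏ q : Fin k, if p < q then (w ∘ Fin.rev) q - (w ∘ Fin.rev) p else 1)
      = ∏ q : Fin k, if q < Fin.rev p then w q - w (Fin.rev p) else 1 := by
    intro p
    refine Fintype.prod_equiv Fin.revPerm _ _ fun q => ?_
    simp only [Function.comp_apply, Fin.revPerm_apply]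
    congr 1
    rw [eq_iff_iff]
    rw [← Fin.rev_lt_rev]
  calc (∏ p : Fin k, ∏ q : Fin k, if p < q then (w ∘ Fin.rev) q - (w ∘ Fin.rev) p else 1)
      = ∏ p : Fin k, ∏ q : Fin k, if q < Fin.rev p then w q - w (Fin.rev p) else 1 :=
        Finset.prod_congr rfl fun p _ => h1 p
    _ = ∏ p : Fin k, ∏ q : Fin k, if q < p then w q - w p else 1 :=
        Fintype.prod_equiv Fin.revPerm _ _ fun p => rfl
    _ = ∏ q : Fin k, ∏ p : Fin k, if q < p then w q - w p else 1 := Finset.prod_comm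

lemma keyV (m : ℕ) (v : Fin (m + 1) → R) (c : ℕ → R) :
    ∑ j : Fin (m + 1), (-1 : R) ^ (j : ℕ) *
        (∑ k ∈ Finset.range (m + 1), c k * v j ^ k) * Vprod (v ∘ j.succAbove)
      = c m * Vprod v := by
  have h := keyD m (v ∘ Fin.rev) c
  rw [Dprod_rev] at h
  rw [← h]
  refine Fintype.sum_equiv Fin.revPerm _ _ fun j => ?_
  simp only [Fin.revPerm_apply, Function.comp_apply, Fin.rev_rev]
  have hcomp : (v ∘ Fin.rev) ∘ (Fin.rev j).succAbove = (v ∘ j.succAbove) ∘ Fin.rev := by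
    funext i
    simp only [Function.comp_apply]
    congr 1
    rw [Fin.rev_succAbove, Fin.rev_rev]
  rw [hcomp, Dprod_rev]
  have hsign : (-1 : R) ^ (m + ((Fin.rev j) : ℕ)) = (-1 : R) ^ (j : ℕ) := by
    have hj : (j : ℕ) ≤ m := Nat.lt_succ_iff.mp j.isLt
    rw [Fin.val_rev]
    rw [show m + (m + 1 - ((j : ℕ) + 1)) = (j : ℕ) + 2 * (m - (j : ℕ)) by omega]
    rw [pow_add, pow_mul]
    simp
  rw [hsign]

lemma brS_insert (n : ℕ) {m : ℕ} {a : Fin m} {T : Finset (Fin m)} (ha : a ∉ T) :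
    brS n (insert a T) =
      (∏ s ∈ T, if a < s then X a ^ n - X s ^ n else 1) *
        ((∏ s ∈ T, if s < a then X s ^ n - X a ^ n else 1) * brS n T) := by
  rw [brS, Finset.prod_insert ha, Finset.prod_insert ha, if_neg (lt_irrefl a), one_mul]
  have h : ∀ p ∈ T, (∏ q ∈ insert a T, if p < q then X p ^ n - X q ^ n else 1)
      = (if p < a then X p ^ n - X a ^ n else 1) *
        ∏ q ∈ T, if p < q then (X p ^ n - X q ^ n : MvPolynomial (Fin m) ℂ) else 1 :=
    fun p _ => Finset.prod_insert ha
  rw [Finset.prod_congr rfl h, Finset.prod_mul_distrib, brS]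

lemma brS_image (n : ℕ) {k m : ℕ} {g : Fin k → Fin m} (hg : StrictMono g) :
    brS n (Finset.image g Finset.univ)
      = Vprod (fun j => (X (g j) : MvPolynomial (Fin m) ℂ) ^ n) := by
  rw [brS, Finset.prod_image (fun a _ b _ h => hg.injective h)]
  refine Finset.prod_congr rfl fun p _ => ?_
  rw [Finset.prod_image (fun a _ b _ h => hg.injective h)]
  refine Finset.prod_congr rfl fun q _ => ?_
  congr 1
  rw [eq_iff_iff]
  exact hg.lt_iff_lt

end GADecomp

open GADecomp

/-- In `ℂ[x_0, …, x_{2M}]`, with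
`g_A = x_0 ⋯ x_{M-1} [x_0 … x_{M-1}] [x_M … x_{2M}]` and, for `j = 0, …, M`,
`h_{A_j} = x_1 ⋯ x_{M-1} x_{M+j} [x_1 … x_{M-1} x_{M+j}] [x_M … x̂_{M+j} … x_{2M}]`,
one has
`g_A = ∑_{j=0}^M (-1)^{j+M-1} x_0 x_{M+j}^{n-1} [x_0x_1] ⋯ [x_0x_{M-1}] h_{A_j}`.
(Here the summation index `t` runs over the variables `x_{M+j}`, `j = 0, …, M`,
i.e. over the indices `t` with `M ≤ t`, and `(-1)^{j+M-1} = (-1)^{t-1}`.) -/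
theorem gA_decomposition_even (M n : ℕ) (hM : 1 ≤ M) (hn : 1 ≤ n) :
    (∏ t ∈ Finset.univ.filter (fun t : Fin (2 * M + 1) => t.val < M), X t) *
        brS n (Finset.univ.filter (fun t : Fin (2 * M + 1) => t.val < M)) *
        brS n (Finset.univ.filter (fun t : Fin (2 * M + 1) => M ≤ t.val)) =
      ∑ t ∈ Finset.univ.filter (fun t : Fin (2 * M + 1) => M ≤ t.val),
        (-1 : MvPolynomial (Fin (2 * M + 1)) ℂ) ^ (t.val - 1) *
          X 0 * X t ^ (n - 1) *
          (∏ s ∈ Finset.univ.filter (fun s : Fin (2 * M + 1) => 1 ≤ s.val ∧ s.val < M),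
            (X 0 ^ n - X s ^ n)) *
          ((∏ s ∈ Finset.univ.filter (fun s : Fin (2 * M + 1) => 1 ≤ s.val ∧ s.val < M), X s) *
            X t *
            brS n (insert t
              (Finset.univ.filter (fun s : Fin (2 * M + 1) => 1 ≤ s.val ∧ s.val < M))) *
            brS n ((Finset.univ.filter (fun s : Fin (2 * M + 1) => M ≤ s.val)).erase t)) := by
  classical
  obtain ⟨M', rfl⟩ : ∃ M', M = M' + 1 := ⟨M - 1, by omega⟩
  obtain ⟨n', rfl⟩ : ∃ n', n = n' + 1 := ⟨n - 1, by omega⟩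
  set M := M' + 1 with hMdef
  set n := n' + 1 with hndef
  set R := MvPolynomial (Fin (2 * M + 1)) ℂ with hRdef
  set S : Finset (Fin (2 * M + 1)) :=
    Finset.univ.filter (fun s : Fin (2 * M + 1) => 1 ≤ s.val ∧ s.val < M) with hSdef
  set A : Finset (Fin (2 * M + 1)) :=
    Finset.univ.filter (fun t : Fin (2 * M + 1) => t.val < M) with hAdef
  set B : Finset (Fin (2 * M + 1)) :=
    Finset.univ.filter (fun t : Fin (2 * M + 1) => M ≤ t.val) with hBdef
  set e : Fin (M + 1) → Fin (2 * M + 1) := fun j => ⟨M + j.val, by omega⟩ with hedef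
  set v : Fin (M + 1) → R := fun j => X (e j) ^ n with hvdef
  -- basic membership facts
  have hmemS : ∀ s : Fin (2 * M + 1), s ∈ S ↔ 1 ≤ s.val ∧ s.val < M := by
    intro s; simp [hSdef]
  have h0S : (0 : Fin (2 * M + 1)) ∉ S := by
    rw [hmemS]; simp
  have hA : A = insert 0 S := by
    ext t
    simp only [hAdef, hSdef, Finset.mem_filter, Finset.mem_univ, true_and, Finset.mem_insert]
    constructor
    · intro ht
      rcases Nat.eq_zero_or_pos t.val with h0 | h0
      · left; exact Fin.ext (by simpa using h0)
      · right; exact ⟨h0, ht⟩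
    · rintro (rfl | ⟨h1, h2⟩)
      · simp [hMdef]
      · exact h2
  have he : StrictMono e := by
    intro a b hab
    simp only [hedef, Fin.lt_def]
    exact Nat.add_lt_add_left hab M
  have heval : ∀ j : Fin (M + 1), (e j).val = M + j.val := fun j => rfl
  have hBim : B = Finset.image e Finset.univ := by
    ext t
    simp only [hBdef, Finset.mem_filter, Finset.mem_univ, true_and, Finset.mem_image]
    constructor
    · intro ht
      exact ⟨⟨t.val - M, by omega⟩, by ext; simp [heval]; omega⟩
    · rintro ⟨j, rfl⟩
      rw [heval]; omega
  have hsaSM : ∀ j : Fin (M + 1), StrictMono (e ∘ j.succAbove) :=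
    fun j => he.comp (Fin.strictMono_succAbove j)
  have hsaim : ∀ j : Fin (M + 1),
      (Finset.image e Finset.univ).erase (e j) = Finset.image (e ∘ j.succAbove) Finset.univ := by
    intro j
    have h1 : (Finset.image j.succAbove Finset.univ) = Finset.univ.erase j := by
      ext i
      simp only [Finset.mem_image, Finset.mem_univ, true_and, Finset.mem_erase, and_true]
      constructor
      · rintro ⟨z, rfl⟩; exact Fin.succAbove_ne j z
      · intro hi; exact Fin.exists_succAbove_eq hi
    rw [← Finset.image_image, h1, Finset.image_erase he.injective]
  have hcardS : S.card = M - 1 := by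
    have : S = Finset.Ioo (0 : Fin (2 * M + 1)) ⟨M, by omega⟩ := by
      ext s
      rw [hmemS, Finset.mem_Ioo]
      constructor
      · rintro ⟨h1, h2⟩
        exact ⟨by rw [Fin.lt_def]; simp only [Fin.val_zero]; omega, by rw [Fin.lt_def]; exact h2⟩
      · rintro ⟨h1, h2⟩
        rw [Fin.lt_def] at h1 h2
        exact ⟨by simp only [Fin.val_zero] at h1; omega, h2⟩
    rw [this, Fin.card_Ioo]
    simp
  -- the polynomial
  set P : Polynomial R :=
    Polynomial.X * ∏ s ∈ S, (Polynomial.C ((X s : R) ^ n) - Polynomial.X) with hPdef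
  have hPdeg : P.natDegree < M + 1 := by
    have h1 : (∏ s ∈ S, (Polynomial.C ((X s : R) ^ n) - Polynomial.X)).natDegree ≤ M - 1 := by
      calc (∏ s ∈ S, (Polynomial.C ((X s : R) ^ n) - Polynomial.X)).natDegree
          ≤ ∑ s ∈ S, (Polynomial.C ((X s : R) ^ n) - Polynomial.X).natDegree :=
            Polynomial.natDegree_prod_le _ _
        _ ≤ ∑ _s ∈ S, (1 : ℕ) := by
            refine Finset.sum_le_sum fun s _ => ?_
            refine le_trans (Polynomial.natDegree_sub_le _ _) ?_
            simp
        _ = M - 1 := by rw [Finset.sum_const, hcardS]; simp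
    have h2 := Polynomial.natDegree_mul_le (p := (Polynomial.X : Polynomial R))
      (q := ∏ s ∈ S, (Polynomial.C ((X s : R) ^ n) - Polynomial.X))
    rw [hPdef]
    refine lt_of_le_of_lt h2 ?_
    rw [Polynomial.natDegree_X]
    omega
  have hPeval : ∀ x : R, P.eval x = x * ∏ s ∈ S, ((X s : R) ^ n - x) := by
    intro x
    rw [hPdef]
    simp [Polynomial.eval_prod]
  have hPcoeff : P.coeff M = (-1 : R) ^ M' := by
    have hQ : (∏ s ∈ S, (Polynomial.C ((X s : R) ^ n) - Polynomial.X))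
        = (-1 : Polynomial R) ^ (M - 1) * ∏ s ∈ S, (Polynomial.X - Polynomial.C ((X s : R) ^ n)) := by
      rw [← hcardS, ← Finset.prod_const, ← Finset.prod_mul_distrib]
      exact Finset.prod_congr rfl fun s _ => by ring
    have hmon : (∏ s ∈ S, (Polynomial.X - Polynomial.C ((X s : R) ^ n))).Monic :=
      Polynomial.monic_prod_of_monic _ _ fun s _ => Polynomial.monic_X_sub_C _
    have hdeg : (∏ s ∈ S, (Polynomial.X - Polynomial.C ((X s : R) ^ n))).natDegree = M - 1 := by
      rw [Polynomial.natDegree_prod _ _ fun s _ => Polynomial.X_sub_C_ne_zero _]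
      rw [Finset.sum_congr rfl fun s _ => Polynomial.natDegree_X_sub_C _]
      rw [Finset.sum_const, hcardS]; simp
    have hCneg : ((-1 : Polynomial R) ^ (M - 1)) = Polynomial.C ((-1 : R) ^ (M - 1)) := by
      rw [map_pow, map_neg, map_one]
    have hcoeffQ : (∏ s ∈ S, (Polynomial.C ((X s : R) ^ n) - Polynomial.X)).coeff (M - 1)
        = (-1 : R) ^ (M - 1) := by
      rw [hQ, hCneg, Polynomial.coeff_C_mul]
      have := hmon.coeff_natDegree
      rw [hdeg] at this
      rw [this, mul_one]
    rw [hPdef]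
    show (Polynomial.X * ∏ s ∈ S, (Polynomial.C ((X s : R) ^ n) - Polynomial.X)).coeff (M' + 1)
      = (-1 : R) ^ M'
    rw [Polynomial.coeff_X_mul]
    exact hcoeffQ
  -- key summation identity
  have hkey : ∑ j : Fin (M + 1), (-1 : R) ^ (j : ℕ) *
      (v j * ∏ s ∈ S, ((X s : R) ^ n - v j)) * Vprod (v ∘ j.succAbove)
      = (-1 : R) ^ M' * Vprod v := by
    have h := keyV M v P.coeff
    rw [hPcoeff] at h
    rw [← h]
    refine Finset.sum_congr rfl fun j _ => ?_
    rw [← Polynomial.eval_eq_sum_range' hPdeg (v j), hPeval]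
  -- restate the goal using the abbreviations
  show (∏ t ∈ A, X t) * brS n A * brS n B
      = ∑ t ∈ B, (-1 : R) ^ (t.val - 1) * X 0 * X t ^ (n - 1) *
          (∏ s ∈ S, ((X 0 : R) ^ n - X s ^ n)) *
          ((∏ s ∈ S, X s) * X t * brS n (insert t S) * brS n (B.erase t))
  have hbrA : brS n (insert (0 : Fin (2 * M + 1)) S)
      = (∏ s ∈ S, ((X 0 : R) ^ n - X s ^ n)) * brS n S := by
    rw [brS_insert n h0S]
    have e1 : (∏ s ∈ S, if (0 : Fin (2 * M + 1)) < s then (X 0 : R) ^ n - X s ^ n else 1)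
        = ∏ s ∈ S, ((X 0 : R) ^ n - X s ^ n) := by
      refine Finset.prod_congr rfl fun s hs => ?_
      rw [hmemS] at hs
      rw [if_pos]
      rw [Fin.lt_def]
      simp only [Fin.val_zero]; omega
    have e2 : (∏ s ∈ S, if s < (0 : Fin (2 * M + 1)) then (X s : R) ^ n - X 0 ^ n else 1)
        = 1 :=
      Finset.prod_eq_one fun s _ => if_neg (by simp)
    rw [e1, e2, one_mul]
  have hterm : ∀ j : Fin (M + 1),
      (-1 : R) ^ ((e j).val - 1) * X 0 * X (e j) ^ (n - 1) *
          (∏ s ∈ S, ((X 0 : R) ^ n - X s ^ n)) *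
          ((∏ s ∈ S, X s) * X (e j) * brS n (insert (e j) S) *
            brS n ((Finset.image e Finset.univ).erase (e j)))
      = (X 0 * (∏ s ∈ S, X s) * (∏ s ∈ S, ((X 0 : R) ^ n - X s ^ n)) * brS n S * (-1) ^ M') *
          ((-1 : R) ^ (j : ℕ) * (v j * ∏ s ∈ S, ((X s : R) ^ n - v j)) *
            Vprod (v ∘ j.succAbove)) := by
    intro j
    have hejS : e j ∉ S := by
      rw [hmemS, heval]
      omega
    have hins : brS n (insert (e j) S)
        = (∏ s ∈ S, ((X s : R) ^ n - X (e j) ^ n)) * brS n S := by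
      rw [brS_insert n hejS]
      have e1 : (∏ s ∈ S, if e j < s then (X (e j) : R) ^ n - X s ^ n else 1) = 1 := by
        refine Finset.prod_eq_one fun s hs => if_neg ?_
        rw [hmemS] at hs
        rw [Fin.lt_def, heval]
        omega
      have e2 : (∏ s ∈ S, if s < e j then (X s : R) ^ n - X (e j) ^ n else 1)
          = ∏ s ∈ S, ((X s : R) ^ n - X (e j) ^ n) := by
        refine Finset.prod_congr rfl fun s hs => ?_
        rw [hmemS] at hs
        rw [if_pos]
        rw [Fin.lt_def, heval]
        omega
      rw [e1, e2, one_mul]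
    have herase : brS n ((Finset.image e Finset.univ).erase (e j))
        = Vprod (v ∘ j.succAbove) := by
      rw [hsaim j, brS_image n (hsaSM j)]
      rfl
    have hsigne : (e j).val - 1 = M' + j.val := by
      rw [heval]
      omega
    rw [hins, herase, hsigne, pow_add]
    have hn1 : n - 1 = n' := rfl
    rw [hn1]
    simp only [hvdef, hndef]
    ring
  rw [hA, hBim, Finset.prod_insert h0S, hbrA, brS_image n he,
    Finset.sum_image (fun x _ y _ h => he.injective h)]
  rw [Finset.sum_congr rfl fun j _ => hterm j]
  rw [← Finset.mul_sum, hkey]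
  have hsq : ((-1 : R) ^ M') * ((-1 : R) ^ M') = 1 := by
    rw [← pow_add, show M' + M' = 2 * M' by ring, pow_mul]
    simp
  have hVv : brS n (Finset.image e Finset.univ) = Vprod v := brS_image n he
  linear_combination (X 0 * (∏ s ∈ S, X s) * (∏ s ∈ S, ((X 0 : R) ^ n - X s ^ n)) *
    brS n S * Vprod v) * hsq.symm
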